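/- arXiv:2308.01456 — 2 statements merged into one kernel-verified Lean document; each statement's English description precedes it below -/
import Mathlib

section
/- (Harary) Let G be a connected graph with two signatures γ and γ'. If every circuit of G has the same weight under γ as under γ', then γ' is a shifting of γ. -/
open scoped Classical
set_option linter.unusedSectionVars false
set_option maxHeartbeats 1000000

namespace SignedFlood

variable {V E : Type} [Fintype V] [DecidableEq V] [Fintype E] [DecidableEq E]

/-- A circuit (closed trail) in a multigraph specified by `ends : E → Sym2 V`.
Darts are triples `(e, u, v)` meaning edge `e` traversed from `u` to `v`. -/
structure Circuit {V E : Type} (ends : E → Sym2 V) where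
  darts : List (E × V × V)
  nonempty : darts ≠ []
  valid : ∀ d ∈ darts, ends d.1 = Sym2.mk d.2.1 d.2.2
  chain : darts.Chain' (fun d d' => d.2.2 = d'.2.1)
  closed : darts.head?.map (fun d => d.2.1) = darts.getLast?.map (fun d => d.2.2)
  edgesNodup : (darts.map Prod.fst).Nodup

namespace Circuit

variable {ends : E → Sym2 V}

/-- The set of edges used by a circuit. -/
def edges (C : Circuit ends) : Finset E := (C.darts.map Prod.fst).toFinset

/-- The weight of a circuit: the sum in `ZMod 2` of the weights of its edges. -/
def weight (γ : E → ZMod 2) (C : Circuit ends) : ZMod 2 :=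
  ((C.darts.map Prod.fst).map γ).sum

/-- A circuit hits `b` if it has an edge (dart) incident to `b`. -/
def Hits (C : Circuit ends) (b : V) : Prop :=
  ∃ d ∈ C.darts, d.2.1 = b ∨ d.2.2 = b

/-- A circuit has `b` as its tail and head. -/
def BasedAt (C : Circuit ends) (b : V) : Prop :=
  C.darts.head?.map (fun d => d.2.1) = some b

end Circuit

/-- Degree of a vertex: loops count twice. -/
noncomputable def degree (ends : E → Sym2 V) (v : V) : ℕ :=
  ∑ e : E, (if ends e = Sym2.mk v v then 2 else if v ∈ ends e then 1 else 0)

/-- Adjacency via some edge. -/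
def Adj (ends : E → Sym2 V) (u v : V) : Prop := ∃ e, ends e = Sym2.mk u v

/-- The multigraph is connected. -/
def Connected (ends : E → Sym2 V) : Prop :=
  ∀ u v : V, Relation.ReflTransGen (Adj ends) u v

/-- Eulerian: connected with all degrees even. -/
def IsEulerian (ends : E → Sym2 V) : Prop :=
  Connected ends ∧ ∀ v : V, Even (degree ends v)

/-- A family of circuits whose edge sets partition the edge set. -/
def IsDecomposition (ends : E → Sym2 V) {k : ℕ} (C : Fin k → Circuit ends) : Prop :=
  ∀ e : E, ∃! i : Fin k, e ∈ (C i).edges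

/-- The flooding number: the maximum size of a circuit-decomposition where each
circuit is non-zero and hits `b` (`0` if there is no such decomposition). -/
noncomputable def floodingNumber (ends : E → Sym2 V) (γ : E → ZMod 2) (b : V) : ℕ :=
  sSup {k : ℕ | ∃ C : Fin k → Circuit ends, IsDecomposition ends C ∧
    ∀ i, (C i).weight γ = 1 ∧ (C i).Hits b}

/-- Shift a signature at a vertex `v`: add `1` to every non-loop edge incident to `v`. -/
noncomputable def shiftAt (ends : E → Sym2 V) (γ : E → ZMod 2) (v : V) : E → ZMod 2 :=
  fun e => γ e + (if v ∈ ends e ∧ ends e ≠ Sym2.mk v v then 1 else 0)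

/-- `γ'` is a shifting of `γ`: obtained by a sequence of shifts at vertices. -/
noncomputable def IsShifting (ends : E → Sym2 V) (γ γ' : E → ZMod 2) : Prop :=
  ∃ l : List V, γ' = l.foldl (shiftAt ends) γ

/-- A pair crosses `X` if it has exactly one member in `X`. -/
def Crossing (X : Set V) (p : Sym2 V) : Prop :=
  ∃ u v, p = Sym2.mk u v ∧ u ∈ X ∧ v ∉ X

/-- `δ(X)`: edges with exactly one end in `X`. -/
noncomputable def cutEdges (ends : E → Sym2 V) (X : Set V) : Finset E :=
  Finset.univ.filter (fun e => Crossing X (ends e))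

/-- `E(X)`: edges with both ends in `X`. -/
noncomputable def insideEdges (ends : E → Sym2 V) (X : Set V) : Finset E :=
  Finset.univ.filter (fun e => ∀ v ∈ ends e, v ∈ X)

/-- `E(Y) ∪ δ(Y)`: edges with at least one end in `Y`. -/
noncomputable def incidentEdges (ends : E → Sym2 V) (Y : Set V) : Finset E :=
  Finset.univ.filter (fun e => ∃ v ∈ ends e, v ∈ Y)

/-- The number of non-zero edges in `F` according to `γ`. -/
noncomputable def nzCount (γ : E → ZMod 2) (F : Finset E) : ℕ :=
  (F.filter (fun e => γ e = 1)).card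

/-- `Y` is `γ`-odd: parity of `γ(E(Y) ∪ δ(Y))` differs from parity of `|δ(Y)|/2`. -/
def OddSet (ends : E → Sym2 V) (γ : E → ZMod 2) (Y : Set V) : Prop :=
  nzCount γ (incidentEdges ends Y) % 2 ≠ ((cutEdges ends Y).card / 2) % 2

/-- The vertex set of the component of `G - X` containing `y`. -/
def compOf (ends : E → Sym2 V) (X : Set V) (y : V) : Set V :=
  {z | Relation.ReflTransGen
    (fun a c => (∃ e, ends e = Sym2.mk a c) ∧ a ∉ X ∧ c ∉ X) y z}

/-- `Y` is the vertex set of a component of `G - X`. -/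
def IsCompOf (ends : E → Sym2 V) (X : Set V) (Y : Set V) : Prop :=
  ∃ y, y ∉ X ∧ Y = compOf ends X y

/-- The number of `γ`-odd components of `G - X`. -/
noncomputable def oddComponents (ends : E → Sym2 V) (γ : E → ZMod 2) (X : Set V) : ℕ :=
  Set.ncard {Y : Set V | IsCompOf ends X Y ∧ OddSet ends γ Y}

/-- A flooding: a circuit-decomposition into `deg(b)/2` circuits, each with `b`
as tail and head. -/
def IsFlooding (ends : E → Sym2 V) (b : V) {k : ℕ} (C : Fin k → Circuit ends) : Prop :=
  k = degree ends b / 2 ∧ IsDecomposition ends C ∧ ∀ i, (C i).BasedAt b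

/-- The number of non-zero circuits in a family of circuits. -/
noncomputable def nonzeroCount (ends : E → Sym2 V) (γ : E → ZMod 2) {k : ℕ}
    (C : Fin k → Circuit ends) : ℕ :=
  (Finset.univ.filter (fun i : Fin k => (C i).weight γ = 1)).card

/-- An optimal flooding maximizes the number of non-zero circuits. -/
def IsOptimalFlooding (ends : E → Sym2 V) (γ : E → ZMod 2) (b : V) {k : ℕ}
    (C : Fin k → Circuit ends) : Prop :=
  IsFlooding ends b C ∧ ∀ (k' : ℕ) (C' : Fin k' → Circuit ends),
    IsFlooding ends b C' → nonzeroCount ends γ C' ≤ nonzeroCount ends γ C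



section HararyAux

variable (ends : E → Sym2 V)

/-- Simple graph underlying the multigraph. -/
def HG : SimpleGraph V where
  Adj u v := u ≠ v ∧ ∃ e, ends e = Sym2.mk u v
  symm := by
    constructor
    rintro u v ⟨hne, e, he⟩
    exact ⟨hne.symm, e, by rw [he, Sym2.eq_swap]⟩
  loopless := by constructor; rintro u ⟨hne, -⟩; exact hne rfl

variable (δ : E → ZMod 2)

/-- Representative edge weight between two vertices. -/
noncomputable def dH (u v : V) : ZMod 2 :=
  if h : ∃ e, ends e = Sym2.mk u v then δ h.choose else 0

lemma zmod2_cases (x : ZMod 2) : x = 0 ∨ x = 1 := by revert x; decide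

lemma zmod2_add_self (x : ZMod 2) : x + x = 0 := by revert x; decide

lemma zmod2_cancel {a b : ZMod 2} (h : a + b = 0) : a = b := by revert h; revert a b; decide

lemma sym2_exists (z : Sym2 V) : ∃ u w, z = Sym2.mk u w :=
  Sym2.ind (fun x y => ⟨x, y, rfl⟩) z

lemma dH_symm (u v : V) : dH ends δ u v = dH ends δ v u := by
  unfold dH
  rw [show Sym2.mk u v = Sym2.mk v u from Sym2.eq_swap]

lemma dH_adj {u v : V} (h : (HG ends).Adj u v) : dH ends δ u v = δ h.2.choose := by
  unfold dH
  rw [dif_pos h.2]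

/-- Weight of a walk in the simple graph. -/
noncomputable def wt {u v : V} (p : (HG ends).Walk u v) : ZMod 2 :=
  (p.darts.map (fun d => dH ends δ d.fst d.snd)).sum

lemma wt_nil {v : V} : wt ends δ (SimpleGraph.Walk.nil : (HG ends).Walk v v) = 0 := rfl

lemma wt_cons {u v w : V} (h : (HG ends).Adj u v) (p : (HG ends).Walk v w) :
    wt ends δ (SimpleGraph.Walk.cons h p) = dH ends δ u v + wt ends δ p := by
  simp [wt]

lemma wt_append {u v w : V} (p : (HG ends).Walk u v) (q : (HG ends).Walk v w) :
    wt ends δ (p.append q) = wt ends δ p + wt ends δ q := by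
  simp [wt, SimpleGraph.Walk.darts_append]

lemma wt_reverse {u v : V} (p : (HG ends).Walk u v) :
    wt ends δ p.reverse = wt ends δ p := by
  unfold wt
  rw [SimpleGraph.Walk.darts_reverse, List.map_reverse, List.sum_reverse, List.map_map]
  congr 1
  apply List.map_congr_left
  intro d _
  exact dH_symm ends δ d.snd d.fst

lemma wt_rotate {u v : V} (p : (HG ends).Walk v v) (h : u ∈ p.support) :
    wt ends δ (p.rotate u h) = wt ends δ p := by
  unfold wt
  exact (((p.rotate_darts u h).perm).map _).sum_eq

end HararyAux

section HararyAux2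

variable (ends : E → Sym2 V) (δ : E → ZMod 2)

/-- The circuit consisting of a single loop. -/
def loopCircuit (e : E) (v : V) (he : ends e = Sym2.mk v v) : Circuit ends where
  darts := [(e, v, v)]
  nonempty := by simp
  valid := by
    intro d hd
    simp only [List.mem_singleton] at hd
    subst hd
    exact he
  chain := List.isChain_singleton _
  closed := by simp
  edgesNodup := by simp

/-- The circuit consisting of two parallel edges. -/
def parallelCircuit {e e' : E} {u w : V} (hee : e ≠ e')
    (he : ends e = Sym2.mk u w) (he' : ends e' = Sym2.mk u w) : Circuit ends where
  darts := [(e, u, w), (e', w, u)]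
  nonempty := by simp
  valid := by
    intro d hd
    simp only [List.mem_cons, List.mem_singleton, List.not_mem_nil, or_false] at hd
    rcases hd with rfl | rfl
    · exact he
    · rw [he', Sym2.eq_swap]
  chain := by simp [List.Chain']
  closed := by simp
  edgesNodup := by simp [hee]

lemma sum_circuit_delta_zero {γ γ' : E → ZMod 2}
    (hsame : ∀ C : Circuit ends, C.weight γ = C.weight γ')
    (hδ : δ = fun e => γ e + γ' e) (C : Circuit ends) :
    ((C.darts.map Prod.fst).map δ).sum = 0 := by
  have hsplit : ∀ l : List E,
      (l.map δ).sum = (l.map γ).sum + (l.map γ').sum := by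
    intro l
    induction l with
    | nil => simp
    | cons a l ih => simp [ih, hδ]; ring
  have h := hsame C
  unfold Circuit.weight at h
  rw [hsplit, h]
  exact zmod2_add_self _
end HararyAux2

section HararyAux3

variable (ends : E → Sym2 V) (δ : E → ZMod 2)
variable (hcirc : ∀ C : Circuit ends, ((C.darts.map Prod.fst).map δ).sum = 0)

include hcirc

lemma delta_loop {e : E} {v : V} (he : ends e = Sym2.mk v v) : δ e = 0 := by
  have h := hcirc (loopCircuit ends e v he)
  simpa [loopCircuit] using h

lemma delta_parallel {e e' : E} (h : ends e = ends e') : δ e = δ e' := by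
  by_cases hee : e = e'
  · rw [hee]
  · obtain ⟨u, w, huw⟩ : ∃ u w, ends e = Sym2.mk u w :=
      Sym2.ind (fun x y => ⟨x, y, rfl⟩) (ends e)
    have hc := hcirc (parallelCircuit ends hee huw (h ▸ huw))
    simp only [parallelCircuit, List.map_cons, List.map_nil, List.sum_cons, List.sum_nil,
      add_zero] at hc
    exact zmod2_cancel hc

omit hcirc

/-- Turn a closed walk with distinct (Sym2) edges into a `Circuit`. -/
noncomputable def toCircuit {v : V} (p : (HG ends).Walk v v) (hne : p.darts ≠ [])
    (hed : p.edges.Nodup) : Circuit ends where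
  darts := p.darts.map (fun d => (d.adj.2.choose, d.fst, d.snd))
  nonempty := by simpa using hne
  valid := by
    intro d' hd'
    simp only [List.mem_map] at hd'
    obtain ⟨d, _, rfl⟩ := hd'
    exact d.adj.2.choose_spec
  chain := by
    show List.IsChain _ _
    rw [List.isChain_map]
    exact p.isChain_dartAdj_darts
  closed := by
    have h1 : p.darts.head? = some (p.darts.head hne) := List.head?_eq_head hne
    have h2 : p.darts.getLast? = some (p.darts.getLast hne) := List.getLast?_eq_getLast hne
    rw [List.head?_map, List.getLast?_map, h1, h2]
    simp
  edgesNodup := by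
    have key : ((p.darts.map (fun d => (d.adj.2.choose, d.fst, d.snd))).map Prod.fst).map ends
        = p.edges := by
      rw [List.map_map, List.map_map]
      apply List.map_congr_left
      intro d _
      simp only [Function.comp_apply]
      rw [(d.adj.2.choose_spec : ends d.adj.2.choose = Sym2.mk d.fst d.snd)]
      rfl
    exact List.Nodup.of_map ends (key ▸ hed)

include hcirc

lemma wt_eq_zero_of_circuit {v : V} (p : (HG ends).Walk v v) (hne : p.darts ≠ [])
    (hed : p.edges.Nodup) : wt ends δ p = 0 := by
  have h := hcirc (toCircuit ends p hne hed)
  unfold toCircuit at h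
  rw [List.map_map, List.map_map] at h
  rw [← h]
  unfold wt
  apply congrArg
  apply List.map_congr_left
  intro d _
  simp only [Function.comp_apply]
  exact dH_adj ends δ d.adj

end HararyAux3

section HararyAux4

variable (ends : E → Sym2 V) (δ : E → ZMod 2)

lemma endpoint_edge_not_mem {u v : V} (r : (HG ends).Walk u v) (hr : r.IsPath)
    (hlen : 2 ≤ r.length) : Sym2.mk u v ∉ r.edges := by
  intro hm
  cases r with
  | nil => simp at hlen
  | @cons _ w _ h' r'' =>
    rw [SimpleGraph.Walk.edges_cons, List.mem_cons] at hm
    rcases hm with hm | hm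
    · rw [Sym2.eq_iff] at hm
      rcases hm with ⟨-, rfl⟩ | ⟨huw, -⟩
      · have hr'' : r''.IsPath := ((SimpleGraph.Walk.cons_isPath_iff h' r'').mp hr).1
        have : r'' = SimpleGraph.Walk.nil :=
          (SimpleGraph.Walk.isPath_iff_eq_nil (p := r'')).mp hr''
        subst this
        simp [SimpleGraph.Walk.length_cons] at hlen
      · exact h'.ne huw
    · exact ((SimpleGraph.Walk.cons_isPath_iff h' r'').mp hr).2
        (r''.fst_mem_support_of_mem_edges hm)

variable (hcirc : ∀ C : Circuit ends, ((C.darts.map Prod.fst).map δ).sum = 0)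

include hcirc

lemma wt_closed_zero : ∀ (n : ℕ) {v : V} (p : (HG ends).Walk v v),
    p.length = n → wt ends δ p = 0 := by
  intro n
  induction n using Nat.strong_induction_on with
  | _ n ih =>
    intro v p hn
    by_cases hnd : p.support.tail.Nodup
    · -- no repeated interior vertex
      cases p with
      | nil => rfl
      | @cons _ u _ h r =>
        have hrsupp : r.support.Nodup := by
          have : (SimpleGraph.Walk.cons h r).support.tail = r.support := by
            simp [SimpleGraph.Walk.support_cons]
          rwa [this] at hnd
        have hr : r.IsPath := SimpleGraph.Walk.IsPath.mk' hrsupp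
        cases r with
        | nil => exact absurd rfl h.ne
        | @cons _ w _ h' r'' =>
          by_cases hw : w = v
          · subst hw
            rw [wt_cons, wt_cons]
            have hlen : r''.length < n := by
              rw [← hn, SimpleGraph.Walk.length_cons, SimpleGraph.Walk.length_cons]
              omega
            rw [ih r''.length hlen r'' rfl]
            rw [dH_symm ends δ u w, add_zero]
            exact zmod2_add_self _
          · -- build a circuit
            have hr''len : 1 ≤ r''.length := by
              by_contra hcon
              push_neg at hcon
              exact hw (SimpleGraph.Walk.eq_of_length_eq_zero (p := r'') (by omega))
            have hlen2 : 2 ≤ (SimpleGraph.Walk.cons h' r'').length := by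
              rw [SimpleGraph.Walk.length_cons]; omega
            have hnm : Sym2.mk v u ∉ (SimpleGraph.Walk.cons h' r'').edges := by
              rw [Sym2.eq_swap]
              exact endpoint_edge_not_mem ends (SimpleGraph.Walk.cons h' r'') hr hlen2
            have hed : (SimpleGraph.Walk.cons h (SimpleGraph.Walk.cons h' r'')).edges.Nodup := by
              rw [SimpleGraph.Walk.edges_cons]
              exact List.Nodup.cons hnm hr.edges_nodup
            exact wt_eq_zero_of_circuit ends δ hcirc _ (by simp) hed
    · -- repeated interior vertex: split
      obtain ⟨x, hdup⟩ := List.exists_duplicate_iff_not_nodup.mpr hnd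
      have hcount : 2 ≤ p.support.tail.count x := List.duplicate_iff_two_le_count.mp hdup
      have hx : x ∈ p.support := List.mem_of_mem_tail hdup.mem
      have hwtrot := wt_rotate ends δ p hx
      have hlenrot : (p.rotate x hx).length = p.length := by
        have := ((p.rotate_darts x hx).perm).length_eq
        rwa [SimpleGraph.Walk.length_darts, SimpleGraph.Walk.length_darts] at this
      have hcountrot : 2 ≤ (p.rotate x hx).support.tail.count x := by
        rw [(p.support_rotate x hx).perm.count_eq]
        exact hcount
      rw [← hwtrot]
      generalize hq : p.rotate x hx = q at hlenrot hcountrot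
      clear hwtrot hq hdup hcount hnd hx
      cases q with
      | nil =>
        rfl
      | @cons _ y _ h r =>
        have hsupp : (SimpleGraph.Walk.cons h r).support.tail = r.support := by
          simp [SimpleGraph.Walk.support_cons]
        rw [hsupp] at hcountrot
        have hxr : x ∈ r.support := by
          rw [← List.count_pos_iff]
          omega
        have hspec := r.take_spec hxr
        set a := r.takeUntil x hxr with ha
        set b := r.dropUntil x hxr with hb
        have hcnta : a.support.count x = 1 := r.count_support_takeUntil_eq_one hxr
        have hcntb : 1 ≤ b.support.tail.count x := by
          have : r.support = a.support ++ b.support.tail := by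
            rw [← hspec, SimpleGraph.Walk.support_append]
          rw [this, List.count_append, hcnta] at hcountrot
          omega
        have hblen : 1 ≤ b.length := by
          by_contra hcon
          push_neg at hcon
          have hb0 : b.length = 0 := by omega
          have hsl : b.support.length = 1 := by rw [b.length_support, hb0]
          have htail : b.support.tail = [] := by
            have hlt := List.length_tail (l := b.support)
            rw [hsl] at hlt
            exact List.length_eq_zero_iff.mp (by omega)
          rw [htail] at hcntb
          simp at hcntb
        have hlensum : a.length + b.length = r.length := by
          rw [← hspec, SimpleGraph.Walk.length_append]
        have hlen1 : (SimpleGraph.Walk.cons h a).length < n := by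
          rw [SimpleGraph.Walk.length_cons]
          have : (SimpleGraph.Walk.cons h r).length = r.length + 1 :=
            SimpleGraph.Walk.length_cons _ _
          omega
        have hlen2 : b.length < n := by
          have : (SimpleGraph.Walk.cons h r).length = r.length + 1 :=
            SimpleGraph.Walk.length_cons _ _
          omega
        have h1 := ih _ hlen1 (SimpleGraph.Walk.cons h a) rfl
        have h2 := ih _ hlen2 b rfl
        rw [wt_cons] at h1 ⊢
        rw [← hspec, wt_append]
        rw [← add_assoc, h1, zero_add]
        exact h2

end HararyAux4

section HararyMain

variable (ends : E → Sym2 V)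

lemma reach_of_connected (hconn : Connected ends) (r x : V) : (HG ends).Reachable r x := by
  have h := hconn r x
  induction h with
  | refl => exact SimpleGraph.Reachable.refl r
  | tail hab hbc ih =>
    rename_i b c
    obtain ⟨e, he⟩ := hbc
    by_cases hbc' : b = c
    · rwa [← hbc']
    · exact ih.trans (SimpleGraph.Adj.reachable ⟨hbc', e, he⟩)

lemma foldl_shift (l : List V) (γ₀ : E → ZMod 2) (e : E) :
    (l.foldl (shiftAt ends) γ₀) e = γ₀ e +
      (l.map (fun v => if v ∈ ends e ∧ ends e ≠ Sym2.mk v v then (1 : ZMod 2) else 0)).sum := by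
  induction l generalizing γ₀ with
  | nil => simp
  | cons v l ih =>
    rw [List.foldl_cons, ih, List.map_cons, List.sum_cons, ← add_assoc]
    rfl

end HararyMain


/-- Harary -/
theorem harary (ends : E → Sym2 V) (γ γ' : E → ZMod 2)
    (hconn : Connected ends)
    (hsame : ∀ C : Circuit ends, C.weight γ = C.weight γ') :
    IsShifting ends γ γ' := by
  classical
  by_cases hV : Nonempty V
  case neg =>
    refine ⟨[], funext fun e => ?_⟩
    obtain ⟨u, w, -⟩ := sym2_exists (ends e)
    exact absurd ⟨u⟩ hV
  obtain ⟨r⟩ := hV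
  set δ : E → ZMod 2 := fun e => γ e + γ' e with hδ
  have hcirc : ∀ C : Circuit ends, ((C.darts.map Prod.fst).map δ).sum = 0 :=
    fun C => sum_circuit_delta_zero ends δ hsame hδ C
  set f : V → ZMod 2 := fun x => wt ends δ (reach_of_connected ends hconn r x).some with hf
  -- key identity for adjacent vertices
  have key1 : ∀ {u w : V}, (HG ends).Adj u w → dH ends δ u w = f u + f w := by
    intro u w h
    simp only [hf]
    set Pu := (reach_of_connected ends hconn r u).some with hPu
    set Pw := (reach_of_connected ends hconn r w).some with hPw
    have hclosed : wt ends δ (Pu.append (SimpleGraph.Walk.cons h Pw.reverse)) = 0 :=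
      wt_closed_zero ends δ hcirc _ _ rfl
    rw [wt_append, wt_cons, wt_reverse] at hclosed
    have hz : ∀ a b c : ZMod 2, a + (b + c) = 0 → b = a + c := by decide
    exact hz _ _ _ hclosed
  -- delta on nonloop edges
  have key2 : ∀ (e : E) (u w : V), ends e = Sym2.mk u w → u ≠ w → δ e = f u + f w := by
    intro e u w he huw
    have hadj : (HG ends).Adj u w := ⟨huw, e, he⟩
    have h1 : dH ends δ u w = δ hadj.2.choose := dH_adj ends δ hadj
    have h2 : δ hadj.2.choose = δ e :=
      delta_parallel ends δ hcirc (by rw [hadj.2.choose_spec, he])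
    rw [← h2, ← h1]
    exact key1 hadj
  set S : Finset V := Finset.univ.filter (fun v => f v = 1) with hS
  refine ⟨S.toList, funext fun e => ?_⟩
  rw [foldl_shift]
  -- turn the list sum into a finset sum
  have hsum : ∀ g : V → ZMod 2, (S.toList.map g).sum = ∑ v ∈ S, g v := by
    intro g
    rw [Finset.sum_eq_multiset_sum, ← Finset.coe_toList S, Multiset.map_coe, Multiset.sum_coe]
  rw [hsum]
  obtain ⟨u, w, he⟩ := sym2_exists (ends e)
  have hgoal : δ e = ∑ v ∈ S, (if v ∈ ends e ∧ ends e ≠ Sym2.mk v v then (1 : ZMod 2) else 0) := by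
    by_cases huw : u = w
    · -- loop edge
      subst huw
      rw [delta_loop ends δ hcirc he]
      refine (Finset.sum_eq_zero ?_).symm
      intro v _
      rw [if_neg]
      rintro ⟨hv, hne⟩
      rw [he, Sym2.mem_iff] at hv
      have : v = u := by tauto
      subst this
      exact hne he
    · -- nonloop edge
      rw [key2 e u w he huw]
      have hterm : ∀ v : V, (if v ∈ ends e ∧ ends e ≠ Sym2.mk v v then (1 : ZMod 2) else 0)
          = (if v = u then (1 : ZMod 2) else 0) + (if v = w then 1 else 0) := by
        intro v
        rw [he]
        by_cases h1 : v = u <;> by_cases h2 : v = w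
        · exact absurd (h1.symm.trans h2) huw
        · subst h1
          simp [Sym2.mem_iff, Sym2.eq_iff, huw, Ne.symm huw, h2]
        · subst h2
          simp [Sym2.mem_iff, Sym2.eq_iff, huw, Ne.symm huw, h1]
        · simp [Sym2.mem_iff, h1, h2]
      rw [Finset.sum_congr rfl (fun v _ => hterm v), Finset.sum_add_distrib]
      have hind : ∀ z : V, (∑ v ∈ S, if v = z then (1 : ZMod 2) else 0) = f z := by
        intro z
        rw [Finset.sum_ite_eq' S z (fun _ => (1 : ZMod 2))]
        by_cases hz : z ∈ S
        · rw [if_pos hz]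
          rw [hS] at hz
          simp only [Finset.mem_filter, Finset.mem_univ, true_and] at hz
          exact hz.symm
        · rw [if_neg hz]
          rw [hS] at hz
          simp only [Finset.mem_filter, Finset.mem_univ, true_and] at hz
          rcases zmod2_cases (f z) with h0 | h1
          · exact h0.symm
          · exact absurd h1 hz
      rw [hind u, hind w]
  rw [← hgoal]
  have hfin : γ e + δ e = γ' e := by
    simp only [hδ]
    rw [← add_assoc, zmod2_add_self, zero_add]
  exact hfin.symm

end SignedFlood
end

section
/- For any RES-graph (G, γ, b), the maximum number of non-zero circuits in a flooding of (G, γ, b) equals the flooding number ν̃(G, γ, b). -/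
open scoped Classical

namespace SignedFlood

variable {V E : Type} [Fintype V] [DecidableEq V] [Fintype E] [DecidableEq E]

set_option linter.unusedSectionVars false

section Aux

variable {ends : E → Sym2 V} {b : V} {γ : E → ZMod 2}

private lemma closed_iff {l : List (E × V × V)} (h : l ≠ []) :
    (l.head?.map (fun d => d.2.1) = l.getLast?.map (fun d => d.2.2)) ↔
      (l.head h).2.1 = (l.getLast h).2.2 := by
  rw [List.head?_eq_head h, List.getLast?_eq_getLast h]
  simp

private lemma basedAt_iff {C : Circuit ends} :
    C.BasedAt b ↔ (C.darts.head C.nonempty).2.1 = b := by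
  rw [Circuit.BasedAt, List.head?_eq_head C.nonempty]
  simp

private lemma lastEnd_of_based {C : Circuit ends} (h : C.BasedAt b) :
    (C.darts.getLast C.nonempty).2.2 = b := by
  have := (closed_iff C.nonempty).1 C.closed
  rw [← this]; exact basedAt_iff.1 h

private lemma Circuit.basedAt_hits {C : Circuit ends} (h : C.BasedAt b) : C.Hits b :=
  ⟨C.darts.head C.nonempty, List.head_mem C.nonempty, Or.inl (basedAt_iff.1 h)⟩

/-- weight of a list of darts -/
private def wsum (γ : E → ZMod 2) (l : List (E × V × V)) : ZMod 2 :=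
  ((l.map Prod.fst).map γ).sum

private lemma wsum_append (γ : E → ZMod 2) (l1 l2 : List (E × V × V)) :
    wsum γ (l1 ++ l2) = wsum γ l1 + wsum γ l2 := by
  simp [wsum]

private lemma weight_eq_wsum (C : Circuit ends) : C.weight γ = wsum γ C.darts := rfl

private lemma wsum_flatMap (γ : E → ZMod 2) (L : List (Circuit ends)) :
    wsum γ (L.flatMap Circuit.darts) = (L.map (Circuit.weight γ)).sum := by
  induction L with
  | nil => simp [wsum]
  | cons c L ih => rw [List.flatMap_cons, wsum_append, ih]; simp [weight_eq_wsum]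

/-- The flat edge list of a list of circuits. -/
private def flatE (L : List (Circuit ends)) : List E := (L.flatMap Circuit.darts).map Prod.fst

private def GoodL (L : List (Circuit ends)) : Prop :=
  (flatE L).Nodup ∧ ∀ e : E, e ∈ flatE L

private lemma flatE_eq (L : List (Circuit ends)) :
    flatE L = (L.map (fun c => c.darts.map Prod.fst)).flatten := by
  rw [flatE, List.flatMap_def, List.map_flatten, List.map_map]
  rfl

private lemma mem_flatE {e : E} {L : List (Circuit ends)} :
    e ∈ flatE L ↔ ∃ c ∈ L, e ∈ c.edges := by
  simp only [flatE, List.mem_map, List.mem_flatMap, Circuit.edges, List.mem_toFinset]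
  constructor
  · rintro ⟨d, ⟨c, hc, hd⟩, rfl⟩; exact ⟨c, hc, d, hd, rfl⟩
  · rintro ⟨c, hc, d, hd, rfl⟩; exact ⟨d, ⟨c, hc, hd⟩, rfl⟩

private lemma goodL_ofFn {k : ℕ} {C : Fin k → Circuit ends}
    (h : IsDecomposition ends C) : GoodL (List.ofFn C) := by
  constructor
  · rw [flatE_eq, List.nodup_flatten]
    constructor
    · intro l hl
      obtain ⟨c, _, rfl⟩ := List.mem_map.1 hl
      exact c.edgesNodup
    · rw [List.map_ofFn, List.pairwise_ofFn]
      intro i j hij e he he'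
      have h1 : e ∈ (C i).edges := List.mem_toFinset.2 he
      have h2 : e ∈ (C j).edges := List.mem_toFinset.2 he'
      obtain ⟨u, _, hu⟩ := h e
      exact absurd ((hu i h1).trans (hu j h2).symm) (Fin.ne_of_lt hij)
  · intro e
    obtain ⟨i, hi, -⟩ := h e
    exact mem_flatE.2 ⟨C i, (List.mem_ofFn).2 ⟨i, rfl⟩, hi⟩

private lemma isDecomposition_get {L : List (Circuit ends)} (h : GoodL L) :
    IsDecomposition ends (fun i : Fin L.length => L.get i) := by
  have hnd := h.1
  rw [flatE_eq, List.nodup_flatten] at hnd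
  have hpw := hnd.2
  rw [List.pairwise_iff_get] at hpw
  intro e
  obtain ⟨c, hc, hce⟩ := mem_flatE.1 (h.2 e)
  obtain ⟨i, rfl⟩ := List.mem_iff_get.1 hc
  refine ⟨i, hce, ?_⟩
  intro j hj
  by_contra hne
  have key : ∀ (a b : Fin L.length), a < b → e ∈ (L.get a).edges → e ∉ (L.get b).edges := by
    intro a b hab ha hb
    have := hpw ⟨a, by simpa using a.2⟩ ⟨b, by simpa using b.2⟩ hab
    simp only [List.get_eq_getElem, List.getElem_map] at this
    exact this (List.mem_toFinset.1 ha) (List.mem_toFinset.1 hb)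
  rcases lt_or_gt_of_ne hne with h' | h'
  · exact key j i h' hj hce
  · exact key i j h' hce hj

end Aux
section Rot
set_option linter.unusedSectionVars false
variable {ends : E → Sym2 V} {b : V} {γ : E → ZMod 2}

private lemma exists_start_dart (C : Circuit ends) (h : C.Hits b) :
    ∃ d ∈ C.darts, d.2.1 = b := by
  obtain ⟨d, hd, hor⟩ := h
  rcases hor with h1 | h2
  · exact ⟨d, hd, h1⟩
  · obtain ⟨⟨i, hi⟩, rfl⟩ := List.mem_iff_get.1 hd
    by_cases hlt : i + 1 < C.darts.length
    · refine ⟨C.darts.get ⟨i+1, hlt⟩, List.mem_iff_get.2 ⟨⟨i+1, hlt⟩, rfl⟩, ?_⟩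
      have := List.isChain_iff_getElem.1 C.chain i (by omega)
      simp only [List.get_eq_getElem] at h2 ⊢
      rw [← this]; exact h2
    · have hne := C.nonempty
      have hil : i = C.darts.length - 1 := by omega
      have hlast : C.darts.getLast hne = C.darts.get ⟨i, hi⟩ := by
        rw [List.getLast_eq_getElem]; simp [hil]
      refine ⟨C.darts.head hne, List.head_mem hne, ?_⟩
      have := (closed_iff hne).1 C.closed
      rw [this, hlast]; exact h2

private lemma rot_core {l s t : List (E × V × V)} (hts : t ++ s = l) (hsne : s ≠ [])
    (hch : List.Chain' (fun d d' => d.2.2 = d'.2.1) l)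
    (hcl : l.head?.map (fun d => d.2.1) = l.getLast?.map (fun d => d.2.2)) :
    List.Chain' (fun d d' => d.2.2 = d'.2.1) (s ++ t) ∧
      (s ++ t).head?.map (fun d => d.2.1) = (s ++ t).getLast?.map (fun d => d.2.2) := by
  subst hts
  rw [List.Chain', List.isChain_append] at hch
  obtain ⟨hct, hcs, hlink⟩ := hch
  rcases eq_or_ne t [] with rfl | htne
  · simp only [List.nil_append, List.append_nil] at *
    exact ⟨hcs, hcl⟩
  · have h1 : (t ++ s).head? = t.head? := List.head?_append_of_ne_nil t htne
    have h2 : (t ++ s).getLast? = s.getLast? := by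
      rw [List.getLast?_append, List.getLast?_eq_getLast hsne]; rfl
    have h3 : (s ++ t).head? = s.head? := List.head?_append_of_ne_nil s hsne
    have h4 : (s ++ t).getLast? = t.getLast? := by
      rw [List.getLast?_append, List.getLast?_eq_getLast htne]; rfl
    rw [h1, h2] at hcl
    rw [List.head?_eq_head htne, List.getLast?_eq_getLast hsne] at hcl
    simp only [Option.map_some] at hcl
    constructor
    · rw [List.Chain', List.isChain_append]
      refine ⟨hcs, hct, ?_⟩
      intro x hx y hy
      rw [List.getLast?_eq_getLast hsne] at hx
      rw [List.head?_eq_head htne] at hy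
      simp only [Option.mem_def, Option.some_inj] at hx hy
      subst hx; subst hy
      exact (Option.some_inj.1 hcl).symm
    · rw [h3, h4, List.head?_eq_head hsne, List.getLast?_eq_getLast htne]
      simp only [Option.map_some, Option.some_inj]
      exact (hlink (t.getLast htne) (by rw [List.getLast?_eq_getLast htne]; rfl)
        (s.head hsne) (by rw [List.head?_eq_head hsne]; rfl)).symm

private lemma exists_rotation (C : Circuit ends) (h : C.Hits b) :
    ∃ C' : Circuit ends, C'.BasedAt b ∧ C'.darts.Perm C.darts := by
  obtain ⟨d, hd, hdb⟩ := exists_start_dart C h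
  obtain ⟨⟨j, hj⟩, rfl⟩ := List.mem_iff_get.1 hd
  have hts : C.darts.take j ++ C.darts.drop j = C.darts := List.take_append_drop j C.darts
  have hsne : C.darts.drop j ≠ [] := by
    intro hc
    have := congrArg List.length hc
    simp at this
    omega
  obtain ⟨hch2, hcl2⟩ := rot_core hts hsne C.chain C.closed
  have hperm : (C.darts.drop j ++ C.darts.take j).Perm C.darts :=
    (List.perm_append_comm).trans (by rw [hts])
  have hne' : C.darts.drop j ++ C.darts.take j ≠ [] := by
    intro hc
    rw [List.append_eq_nil_iff] at hc
    exact hsne hc.1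
  refine ⟨⟨C.darts.drop j ++ C.darts.take j, hne', ?_, hch2, hcl2, ?_⟩, ?_, hperm⟩
  · intro d' hd'
    exact C.valid d' (hperm.mem_iff.1 hd')
  · exact ((hperm.map Prod.fst).nodup_iff).2 C.edgesNodup
  · show (C.darts.drop j ++ C.darts.take j).head?.map (fun d => d.2.1) = some b
    rw [List.head?_append_of_ne_nil _ hsne, List.head?_eq_head hsne, List.head_drop]
    simpa using hdb

end Rot
section Concat
set_option linter.unusedSectionVars false
variable {ends : E → Sym2 V} {b : V} {γ : E → ZMod 2}

private lemma exists_concat (c1 c2 : Circuit ends) (h1 : c1.BasedAt b) (h2 : c2.BasedAt b)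
    (hnd : ((c1.darts ++ c2.darts).map Prod.fst).Nodup) :
    ∃ c : Circuit ends, c.darts = c1.darts ++ c2.darts ∧ c.BasedAt b := by
  have hne : c1.darts ++ c2.darts ≠ [] := by
    intro hc; rw [List.append_eq_nil_iff] at hc; exact c1.nonempty hc.1
  have hlast1 : (c1.darts.getLast c1.nonempty).2.2 = b := lastEnd_of_based h1
  have hlast2 : (c2.darts.getLast c2.nonempty).2.2 = b := lastEnd_of_based h2
  have hhead2 : (c2.darts.head c2.nonempty).2.1 = b := basedAt_iff.1 h2
  have hhead1 : (c1.darts.head c1.nonempty).2.1 = b := basedAt_iff.1 h1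
  refine ⟨⟨c1.darts ++ c2.darts, hne, ?_, ?_, ?_, hnd⟩, rfl, ?_⟩
  · intro d hd
    rcases List.mem_append.1 hd with h' | h'
    · exact c1.valid d h'
    · exact c2.valid d h'
  · rw [List.Chain', List.isChain_append]
    refine ⟨c1.chain, c2.chain, ?_⟩
    intro x hx y hy
    rw [List.getLast?_eq_getLast c1.nonempty] at hx
    rw [List.head?_eq_head c2.nonempty] at hy
    simp only [Option.mem_def, Option.some_inj] at hx hy
    subst hx; subst hy
    rw [hlast1, hhead2]
  · rw [List.head?_append_of_ne_nil _ c1.nonempty,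
      List.getLast?_append, List.getLast?_eq_getLast c2.nonempty]
    rw [List.head?_eq_head c1.nonempty]
    have hor : ∀ (x : Option (E × V × V)) (a : E × V × V), (some a).or x = some a :=
      fun _ _ => rfl
    rw [hor]
    simp [hhead1, hlast2]
  · show (c1.darts ++ c2.darts).head?.map (fun d => d.2.1) = some b
    rw [List.head?_append_of_ne_nil _ c1.nonempty, List.head?_eq_head c1.nonempty]
    simp [hhead1]

private lemma exists_concatAll (B : List (Circuit ends)) :
    ∀ (a : Circuit ends), a.BasedAt b → (∀ c ∈ B, c.BasedAt b) →
    ((a.darts ++ B.flatMap Circuit.darts).map Prod.fst).Nodup →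
    ∃ big : Circuit ends, big.darts = a.darts ++ B.flatMap Circuit.darts ∧ big.BasedAt b := by
  induction B with
  | nil =>
    intro a ha _ _
    exact ⟨a, by simp, ha⟩
  | cons c B ih =>
    intro a ha hB hnd
    have hassoc : a.darts ++ (c :: B).flatMap Circuit.darts
        = (a.darts ++ c.darts) ++ B.flatMap Circuit.darts := by
      rw [List.flatMap_cons, List.append_assoc]
    rw [hassoc] at hnd
    have hnd1 : ((a.darts ++ c.darts).map Prod.fst).Nodup := by
      have hsub : List.Sublist (a.darts ++ c.darts)
          ((a.darts ++ c.darts) ++ B.flatMap Circuit.darts) :=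
        List.sublist_append_left _ _
      exact hnd.sublist (hsub.map Prod.fst)
    obtain ⟨a', ha'd, ha'b⟩ := exists_concat a c ha (hB c (List.mem_cons_self)) hnd1
    obtain ⟨big, hbd, hbb⟩ := ih a' ha'b (fun c' hc' => hB c' (List.mem_cons_of_mem _ hc'))
      (by rw [ha'd]; exact hnd)
    exact ⟨big, by rw [hbd, ha'd, hassoc], hbb⟩

end Concat
section Split
set_option linter.unusedSectionVars false
variable {ends : E → Sym2 V} {γ : E → ZMod 2}

private def notAtB (b : V) : (E × V × V) → Bool := fun d => !decide (d.2.1 = b)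

private def splitAtB (b : V) : List (E × V × V) → List (List (E × V × V))
  | [] => []
  | d :: l =>
    (d :: l.takeWhile (notAtB b)) :: splitAtB b (l.dropWhile (notAtB b))
termination_by l => l.length
decreasing_by
  simp only [List.length_cons]
  have := (List.dropWhile_sublist (l := l) (notAtB b)).length_le
  omega

private lemma splitAtB_flatten (b : V) (l : List (E × V × V)) :
    (splitAtB b l).flatten = l := by
  induction l using splitAtB.induct b with
  | case1 => simp [splitAtB]
  | case2 d l ih =>
    rw [splitAtB, List.flatten_cons, ih]
    simp [List.takeWhile_append_dropWhile]

private lemma splitAtB_ne_nil (b : V) (l : List (E × V × V)) :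
    ∀ s ∈ splitAtB b l, s ≠ [] := by
  induction l using splitAtB.induct b with
  | case1 => simp [splitAtB]
  | case2 d l ih =>
    rw [splitAtB]
    intro s hs
    rcases List.mem_cons.1 hs with rfl | hs'
    · simp
    · exact ih s hs'

private lemma head_dropWhile_atB (b : V) (l : List (E × V × V)) :
    ∀ x ∈ (l.dropWhile (notAtB b)).head?, x.2.1 = b := by
  intro x hx
  have hne : l.dropWhile (notAtB b) ≠ [] := by
    intro hc; rw [hc] at hx; simp at hx
  have := List.head_dropWhile_not (notAtB b) hne
  rw [List.head?_eq_head hne] at hx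
  simp only [Option.mem_def, Option.some_inj] at hx
  subst hx
  simpa [notAtB] using this

private lemma splitAtB_heads (b : V) (l : List (E × V × V))
    (hh : ∀ x ∈ l.head?, x.2.1 = b) :
    ∀ s ∈ splitAtB b l, ∀ x ∈ s.head?, x.2.1 = b := by
  induction l using splitAtB.induct b with
  | case1 => simp [splitAtB]
  | case2 d l ih =>
    rw [splitAtB]
    intro s hs
    rcases List.mem_cons.1 hs with rfl | hs'
    · intro x hx
      simp only [List.head?_cons, Option.mem_def, Option.some_inj] at hx
      subst hx
      exact hh d (by simp)
    · exact ih (head_dropWhile_atB b l) s hs'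

private lemma splitAtB_length (b : V) (l : List (E × V × V))
    (hh : ∀ x ∈ l.head?, x.2.1 = b) :
    (splitAtB b l).length = l.countP (fun d => decide (d.2.1 = b)) := by
  induction l using splitAtB.induct b with
  | case1 => simp [splitAtB]
  | case2 d l ih =>
    rw [splitAtB, List.length_cons, ih (head_dropWhile_atB b l)]
    have hd : d.2.1 = b := hh d (by simp)
    have hsplit : l.countP (fun d => decide (d.2.1 = b))
        = (l.takeWhile (notAtB b)).countP (fun d => decide (d.2.1 = b))
          + (l.dropWhile (notAtB b)).countP (fun d => decide (d.2.1 = b)) := by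
      conv_lhs => rw [← List.takeWhile_append_dropWhile (p := notAtB b) (l := l)]
      rw [List.countP_append]
    have htw : (l.takeWhile (notAtB b)).countP (fun d => decide (d.2.1 = b)) = 0 := by
      rw [List.countP_eq_zero]
      intro x hx
      have := List.mem_takeWhile_imp hx
      simpa [notAtB] using this
    rw [List.countP_cons, hsplit, htw]
    simp [hd]

private lemma splitAtB_chain_last (b : V) (l : List (E × V × V))
    (hch : List.Chain' (fun d d' => d.2.2 = d'.2.1) l)
    (hlast : ∀ x ∈ l.getLast?, x.2.2 = b) :
    ∀ s ∈ splitAtB b l, List.Chain' (fun d d' => d.2.2 = d'.2.1) s ∧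
      ∀ x ∈ s.getLast?, x.2.2 = b := by
  induction l using splitAtB.induct b with
  | case1 => simp [splitAtB]
  | case2 d l ih =>
    have hdecomp : d :: l = (d :: l.takeWhile (notAtB b)) ++ l.dropWhile (notAtB b) := by
      simp [List.takeWhile_append_dropWhile]
    rw [hdecomp, List.Chain', List.isChain_append] at hch
    obtain ⟨hc1, hc2, hlink⟩ := hch
    rw [splitAtB]
    intro s hs
    rcases List.mem_cons.1 hs with rfl | hs'
    · refine ⟨hc1, ?_⟩
      intro x hx
      rcases eq_or_ne (l.dropWhile (notAtB b)) [] with hdw | hdw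
      · -- segment is the whole list
        rw [hdecomp, hdw, List.append_nil] at hlast
        exact hlast x hx
      · have hy := head_dropWhile_atB b l
        have hyne := hdw
        have := hlink x hx ((l.dropWhile (notAtB b)).head hyne)
          (by rw [List.head?_eq_head hyne]; rfl)
        rw [this]
        exact hy _ (by rw [List.head?_eq_head hyne]; rfl)
    · refine ih hc2 ?_ s hs'
      intro x hx
      rcases eq_or_ne (l.dropWhile (notAtB b)) [] with hdw | hdw
      · rw [hdw] at hx; simp at hx
      · apply hlast
        have hg : (d :: l).getLast? = (l.dropWhile (notAtB b)).getLast? := by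
          conv_lhs => rw [hdecomp]
          rw [List.getLast?_append, List.getLast?_eq_getLast hdw]; rfl
        rw [hg]
        exact hx

end Split
section SplitC
set_option linter.unusedSectionVars false
variable {ends : E → Sym2 V} {γ : E → ZMod 2}

private lemma exists_split {b : V} (c : Circuit ends) (hb : c.BasedAt b) :
    ∃ S : List (Circuit ends), S.flatMap Circuit.darts = c.darts ∧ (∀ s ∈ S, s.BasedAt b) ∧
      S.length = c.darts.countP (fun d => decide (d.2.1 = b)) := by
  have hh : ∀ x ∈ c.darts.head?, x.2.1 = b := by
    intro x hx
    rw [List.head?_eq_head c.nonempty] at hx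
    simp only [Option.mem_def, Option.some_inj] at hx
    subst hx; exact basedAt_iff.1 hb
  have hlast : ∀ x ∈ c.darts.getLast?, x.2.2 = b := by
    intro x hx
    rw [List.getLast?_eq_getLast c.nonempty] at hx
    simp only [Option.mem_def, Option.some_inj] at hx
    subst hx; exact lastEnd_of_based hb
  have hmk : ∀ s ∈ splitAtB b c.darts, ∃ cs : Circuit ends, cs.darts = s ∧ cs.BasedAt b := by
    intro s hs
    have hne := splitAtB_ne_nil b c.darts s hs
    have hinfix : s <:+: c.darts := by
      have := List.infix_of_mem_flatten hs
      rwa [splitAtB_flatten] at this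
    have hsub : List.Sublist s c.darts := hinfix.sublist
    obtain ⟨hch, hlast'⟩ := splitAtB_chain_last b c.darts c.chain hlast s hs
    have hhead' := splitAtB_heads b c.darts hh s hs
    refine ⟨⟨s, hne, ?_, hch, ?_, ?_⟩, rfl, ?_⟩
    · exact fun d hd => c.valid d (hsub.subset hd)
    · rw [List.head?_eq_head hne, List.getLast?_eq_getLast hne]
      simp only [Option.map_some, Option.some_inj]
      rw [hhead' _ (by rw [List.head?_eq_head hne]; rfl),
          hlast' _ (by rw [List.getLast?_eq_getLast hne]; rfl)]
    · exact c.edgesNodup.sublist (hsub.map Prod.fst)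
    · show s.head?.map (fun d => d.2.1) = some b
      rw [List.head?_eq_head hne]
      simp [hhead' _ (by rw [List.head?_eq_head hne]; rfl)]
  choose f hf1 hf2 using hmk
  refine ⟨(splitAtB b c.darts).attach.map (fun x => f x.1 x.2), ?_, ?_, ?_⟩
  · rw [List.flatMap_def, List.map_map]
    have heq : (List.map (Circuit.darts ∘ fun x => f x.1 x.2) (splitAtB b c.darts).attach)
        = List.map Subtype.val (splitAtB b c.darts).attach := by
      apply List.map_congr_left
      intro x _
      exact hf1 x.1 x.2
    rw [heq, List.attach_map_subtype_val, splitAtB_flatten]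
  · intro s hs
    obtain ⟨x, _, rfl⟩ := List.mem_map.1 hs
    exact hf2 x.1 x.2
  · rw [List.length_map, List.length_attach, splitAtB_length b c.darts hh]

end SplitC
section Count
set_option linter.unusedSectionVars false
variable {ends : E → Sym2 V} {γ : E → ZMod 2}

private lemma map_end_eq : ∀ (l : List (E × V × V)) (hne : l ≠ [])
    (_ : List.Chain' (fun d d' => d.2.2 = d'.2.1) l),
    l.map (fun d => d.2.2) = (l.map (fun d => d.2.1)).tail ++ [(l.getLast hne).2.2]
  | [], hne, _ => absurd rfl hne
  | [d], _, _ => by simp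
  | d :: d' :: l, _, hch => by
    have h1 : d.2.2 = d'.2.1 := List.isChain_cons_cons.1 hch |>.1
    have ih := map_end_eq (d' :: l) (by simp) (List.isChain_cons_cons.1 hch).2
    simp only [List.map_cons, List.tail_cons] at ih ⊢
    rw [ih, List.getLast_cons (by simp : d' :: l ≠ [])]
    simp [h1]

private lemma count_start_eq_end (c : Circuit ends) (b : V) :
    c.darts.countP (fun d => decide (d.2.1 = b)) = c.darts.countP (fun d => decide (d.2.2 = b)) := by
  have hme := map_end_eq c.darts c.nonempty c.chain
  have h1 : c.darts.countP (fun d => decide (d.2.1 = b))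
      = (c.darts.map (fun d => d.2.1)).countP (fun v => decide (v = b)) := by
    rw [List.countP_map]; rfl
  have h2 : c.darts.countP (fun d => decide (d.2.2 = b))
      = (c.darts.map (fun d => d.2.2)).countP (fun v => decide (v = b)) := by
    rw [List.countP_map]; rfl
  have hhl : (c.darts.getLast c.nonempty).2.2 = (c.darts.head c.nonempty).2.1 :=
    ((closed_iff c.nonempty).1 c.closed).symm
  have hmne : c.darts.map (fun d => d.2.1) ≠ [] := by
    simp [c.nonempty]
  have hcons : c.darts.map (fun d => d.2.1)
      = (c.darts.head c.nonempty).2.1 :: (c.darts.map (fun d => d.2.1)).tail := by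
    conv_lhs => rw [← List.cons_head_tail hmne]
    rw [List.head_map]
  rw [h1, h2, hme, List.countP_append]
  conv_lhs => rw [hcons]
  rw [List.countP_cons]
  have hsing : List.countP (fun v => decide (v = b)) [(c.darts.getLast c.nonempty).2.2]
      = if (c.darts.head c.nonempty).2.1 = b then 1 else 0 := by
    simp [List.countP_cons, hhl]
  rw [hsing]
  simp

private lemma dart_contrib {b : V} (c : Circuit ends) {d : E × V × V} (hd : d ∈ c.darts) :
    (if ends d.1 = Sym2.mk b b then 2 else if b ∈ ends d.1 then 1 else 0)
      = (if d.2.1 = b then 1 else 0) + (if d.2.2 = b then (1:ℕ) else 0) := by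
  obtain ⟨e, u, v⟩ := d
  simp only at hd ⊢
  rw [c.valid (e, u, v) hd]
  by_cases h1 : u = b <;> by_cases h2 : v = b
  · subst h1; subst h2; simp
  · simp [Sym2.eq_iff, Sym2.mem_iff, h1, h2]
  · simp [Sym2.eq_iff, Sym2.mem_iff, h1, h2]
  · simp [Sym2.eq_iff, Sym2.mem_iff, h1, h2, Ne.symm h1, Ne.symm h2]

private lemma sum_wdeg_list {b : V} : ∀ (l : List (E × V × V)),
    (∀ d ∈ l, (if ends d.1 = Sym2.mk b b then 2 else if b ∈ ends d.1 then 1 else 0)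
      = (if d.2.1 = b then 1 else 0) + (if d.2.2 = b then (1:ℕ) else 0)) →
    (l.map (fun d => if ends d.1 = Sym2.mk b b then 2 else if b ∈ ends d.1 then (1:ℕ) else 0)).sum
      = l.countP (fun d => decide (d.2.1 = b)) + l.countP (fun d => decide (d.2.2 = b))
  | [], _ => by simp
  | d :: l, h => by
    have ih := sum_wdeg_list l (fun d' hd' => h d' (List.mem_cons_of_mem _ hd'))
    rw [List.map_cons, List.sum_cons, ih, h d (List.mem_cons_self),
      List.countP_cons, List.countP_cons]
    by_cases h1 : d.2.1 = b <;> by_cases h2 : d.2.2 = b <;> simp [h1, h2] <;> omega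

private lemma circuit_deg_sum {b : V} (c : Circuit ends) :
    ∑ e ∈ c.edges, (if ends e = Sym2.mk b b then 2 else if b ∈ ends e then 1 else 0)
      = 2 * c.darts.countP (fun d => decide (d.2.1 = b)) := by
  rw [Circuit.edges, List.sum_toFinset _ c.edgesNodup, List.map_map]
  have : (List.map ((fun e => if ends e = Sym2.mk b b then 2 else if b ∈ ends e then 1 else 0)
      ∘ Prod.fst) c.darts)
      = c.darts.map (fun d => if ends d.1 = Sym2.mk b b then 2 else if b ∈ ends d.1 then (1:ℕ) else 0) := rfl
  rw [this, sum_wdeg_list c.darts (fun d hd => dart_contrib c hd),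
    ← count_start_eq_end c b]
  omega

private lemma sum_deg {b : V} {k : ℕ} (C : Fin k → Circuit ends) (h : IsDecomposition ends C) :
    2 * (∑ i, (C i).darts.countP (fun d => decide (d.2.1 = b))) = degree ends b := by
  rw [degree]
  have hdisj : (↑(Finset.univ : Finset (Fin k)) : Set (Fin k)).PairwiseDisjoint
      (fun i => (C i).edges) := by
    intro i _ j _ hij
    simp only [Function.onFun]
    rw [Finset.disjoint_left]
    intro e hei hej
    obtain ⟨u, _, hu⟩ := h e
    exact hij ((hu i hei).trans (hu j hej).symm)
  have huniv : (Finset.univ : Finset E) = Finset.univ.biUnion (fun i => (C i).edges) := by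
    ext e
    simp only [Finset.mem_univ, Finset.mem_biUnion, true_iff, true_and]
    obtain ⟨i, hi, -⟩ := h e
    exact ⟨i, hi⟩
  rw [huniv, Finset.sum_biUnion hdisj, Finset.mul_sum]
  exact Finset.sum_congr rfl (fun i _ => (circuit_deg_sum (C i)).symm)

private lemma length_le_sum_list : ∀ (l : List ℕ), (∀ x ∈ l, 1 ≤ x) → l.length ≤ l.sum
  | [], _ => le_refl _
  | x :: l, h => by
    have := length_le_sum_list l (fun y hy => h y (List.mem_cons_of_mem _ hy))
    have hx := h x (List.mem_cons_self)
    simp only [List.length_cons, List.sum_cons]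
    omega

private lemma card_filter_univ_fin {n : ℕ} (q : Fin n → Prop) [DecidablePred q] :
    (Finset.univ.filter q).card = (List.finRange n).countP (fun i => decide (q i)) := by
  have h1 : Finset.univ.filter q = ((List.finRange n).filter (fun i => decide (q i))).toFinset := by
    ext i
    simp [List.mem_filter]
  rw [h1, List.toFinset_card_of_nodup (((List.nodup_finRange n)).filter _),
    ← List.countP_eq_length_filter]

private lemma nonzeroCount_ofFn {k : ℕ} (C : Fin k → Circuit ends) :
    nonzeroCount ends γ C = (List.ofFn C).countP (fun c => decide (c.weight γ = 1)) := by
  rw [nonzeroCount, card_filter_univ_fin, List.ofFn_eq_map, List.countP_map]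
  rfl

private lemma nonzeroCount_get (L : List (Circuit ends)) :
    nonzeroCount ends γ (fun i : Fin L.length => L.get i)
      = L.countP (fun c => decide (c.weight γ = 1)) := by
  rw [nonzeroCount_ofFn]
  congr 1
  exact List.ofFn_get L

private lemma one_le_countP_nonzero {S : List (Circuit ends)} {c : Circuit ends}
    (hS : S.flatMap Circuit.darts = c.darts) (hw : c.weight γ = 1) :
    1 ≤ S.countP (fun s => decide (s.weight γ = 1)) := by
  rw [Nat.one_le_iff_ne_zero]
  intro hzero
  rw [List.countP_eq_zero] at hzero
  have hall : ∀ s ∈ S, s.weight γ = 0 := by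
    intro s hs
    have := hzero s hs
    simp only [decide_eq_true_eq] at this
    have hx : ∀ x : ZMod 2, x ≠ 1 → x = 0 := by decide
    exact hx _ this
  have : c.weight γ = 0 := by
    rw [weight_eq_wsum, ← hS, wsum_flatMap]
    exact List.sum_eq_zero (by
      intro x hx
      obtain ⟨s, hs, rfl⟩ := List.mem_map.1 hx
      exact hall s hs)
  rw [this] at hw
  exact absurd hw (by decide)

end Count
section Main
set_option linter.unusedSectionVars false
variable {ends : E → Sym2 V} {γ : E → ZMod 2} {b : V}

private lemma decomp_le_card {k : ℕ} (C : Fin k → Circuit ends) (h : IsDecomposition ends C) :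
    k ≤ Fintype.card E := by
  have hg := goodL_ofFn h
  have h1 : k ≤ (flatE (List.ofFn C)).length := by
    rw [flatE, List.length_map, List.length_flatMap]
    calc k = ((List.ofFn C).map (List.length ∘ Circuit.darts)).length := by simp
    _ ≤ _ := length_le_sum_list _ (by
        intro x hx
        obtain ⟨c, _, rfl⟩ := List.mem_map.1 hx
        simpa [Nat.one_le_iff_ne_zero] using (List.length_pos_iff.2 c.nonempty).ne')
  exact h1.trans hg.1.length_le_card

private lemma nzc_le {k : ℕ} (C : Fin k → Circuit ends) : nonzeroCount ends γ C ≤ k := by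
  rw [nonzeroCount]
  calc (Finset.univ.filter (fun i : Fin k => (C i).weight γ = 1)).card
      ≤ (Finset.univ : Finset (Fin k)).card := Finset.card_filter_le _ _
  _ = k := by simp

private lemma dirB {n k : ℕ} (C : Fin k → Circuit ends) (hf : IsFlooding ends b C)
    (hn : n = nonzeroCount ends γ C) :
    n ≤ sSup {k : ℕ | ∃ C : Fin k → Circuit ends, IsDecomposition ends C ∧
      ∀ i, (C i).weight γ = 1 ∧ (C i).Hits b} := by
  classical
  have hTbdd : BddAbove {k : ℕ | ∃ C : Fin k → Circuit ends, IsDecomposition ends C ∧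
      ∀ i, (C i).weight γ = 1 ∧ (C i).Hits b} :=
    ⟨Fintype.card E, fun k' ⟨C', hd', _⟩ => decomp_le_card C' hd'⟩
  rcases Nat.eq_zero_or_pos n with rfl | hpos
  · exact Nat.zero_le _
  set p : Circuit ends → Bool := fun c => decide (c.weight γ = 1) with hp
  set L : List (Circuit ends) := List.ofFn C with hL
  have hg : GoodL L := goodL_ofFn hf.2.1
  have hbased : ∀ c ∈ L, c.BasedAt b := by
    intro c hc
    obtain ⟨i, rfl⟩ := (List.mem_ofFn).1 hc
    exact hf.2.2 i
  have hnL : L.countP p = n := by rw [hn, nonzeroCount_ofFn]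
  have hperm : (L.filter p ++ L.filter (fun c => !p c)).Perm L := List.filter_append_perm p L
  have hAlen : (L.filter p).length = n := by rw [← List.countP_eq_length_filter, hnL]
  have hAne : L.filter p ≠ [] := by
    intro hc; rw [hc] at hAlen; simp at hAlen; omega
  obtain ⟨a, A', hA⟩ := List.exists_cons_of_ne_nil hAne
  set Bz : List (Circuit ends) := L.filter (fun c => !p c) with hBz
  have hLperm : (a :: (A' ++ Bz)).Perm L := by
    have : a :: (A' ++ Bz) = (a :: A') ++ Bz := by simp
    rw [this, ← hA]; exact hperm
  have hmemL : ∀ c ∈ a :: (A' ++ Bz), c ∈ L := fun c hc => hLperm.mem_iff.1 hc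
  -- nodup of big flat list
  have hflatperm : ((a :: (A' ++ Bz)).flatMap Circuit.darts).Perm (L.flatMap Circuit.darts) :=
    hLperm.flatMap_right _
  have hndL' : (((a :: (A' ++ Bz)).flatMap Circuit.darts).map Prod.fst).Nodup :=
    ((hflatperm.map Prod.fst).nodup_iff).2 hg.1
  have hndsub : ((a.darts ++ Bz.flatMap Circuit.darts).map Prod.fst).Nodup := by
    refine List.Nodup.sublist ?_ hndL'
    apply List.Sublist.map
    rw [List.flatMap_cons, List.flatMap_append]
    exact (List.sublist_append_right (A'.flatMap Circuit.darts) _).append_left a.darts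
  have haA : a ∈ L.filter p := by rw [hA]; exact List.mem_cons_self
  have haL : a ∈ L := (List.mem_filter.1 haA).1
  obtain ⟨big, hbigd, hbigb⟩ := exists_concatAll Bz a (hbased a haL)
    (fun c hc => hbased c (List.mem_filter.1 hc).1) hndsub
  set L' : List (Circuit ends) := big :: A' with hL'
  -- flat of L' permutes flat of L
  have hflat' : (L'.flatMap Circuit.darts).Perm (L.flatMap Circuit.darts) := by
    refine List.Perm.trans ?_ hflatperm
    rw [List.flatMap_cons, List.flatMap_cons, List.flatMap_append, hbigd]
    have hassoc : (a.darts ++ Bz.flatMap Circuit.darts) ++ A'.flatMap Circuit.darts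
        = a.darts ++ (Bz.flatMap Circuit.darts ++ A'.flatMap Circuit.darts) := by
      rw [List.append_assoc]
    rw [hassoc]
    exact List.Perm.append_left _ List.perm_append_comm
  have hgood' : GoodL L' := by
    constructor
    · exact ((hflat'.map Prod.fst).nodup_iff).2 hg.1
    · intro e
      exact ((hflat'.map Prod.fst).mem_iff).2 (hg.2 e)
  -- weights
  have hwa : a.weight γ = 1 := by
    have := (List.mem_filter.1 haA).2
    simpa [hp] using this
  have hwBz : ∀ c ∈ Bz, c.weight γ = 0 := by
    intro c hc
    have := (List.mem_filter.1 hc).2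
    simp only [hBz, hp, Bool.not_eq_true', decide_eq_false_iff_not] at this
    have hx : ∀ x : ZMod 2, x ≠ 1 → x = 0 := by decide
    exact hx _ this
  have hwbig : big.weight γ = 1 := by
    rw [weight_eq_wsum, hbigd, wsum_append, ← weight_eq_wsum, hwa, wsum_flatMap]
    have : (Bz.map (Circuit.weight γ)).sum = 0 :=
      List.sum_eq_zero (by
        intro x hx
        obtain ⟨c, hc, rfl⟩ := List.mem_map.1 hx
        exact hwBz c hc)
    rw [this, add_zero]
  have hwA' : ∀ c ∈ A', c.weight γ = 1 := by
    intro c hc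
    have : c ∈ L.filter p := by rw [hA]; exact List.mem_cons_of_mem _ hc
    have := (List.mem_filter.1 this).2
    simpa [hp] using this
  have hall : ∀ c ∈ L', c.weight γ = 1 ∧ c.Hits b := by
    intro c hc
    rcases List.mem_cons.1 hc with rfl | hc'
    · exact ⟨hwbig, Circuit.basedAt_hits hbigb⟩
    · refine ⟨hwA' c hc', ?_⟩
      have hcL : c ∈ L := by
        have : c ∈ L.filter p := by rw [hA]; exact List.mem_cons_of_mem _ hc'
        exact (List.mem_filter.1 this).1
      exact Circuit.basedAt_hits (hbased c hcL)
  have hlen : L'.length = n := by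
    have : (L.filter p).length = A'.length + 1 := by rw [hA]; simp
    simp only [hL', List.length_cons]
    omega
  have hmem : L'.length ∈ {k : ℕ | ∃ C : Fin k → Circuit ends, IsDecomposition ends C ∧
      ∀ i, (C i).weight γ = 1 ∧ (C i).Hits b} := by
    refine ⟨fun i => L'.get i, isDecomposition_get hgood', ?_⟩
    intro i
    exact hall _ (List.get_mem _ _)
  rw [← hlen]
  exact le_csSup hTbdd hmem

private lemma dirA {k : ℕ} (C : Fin k → Circuit ends) (hdec : IsDecomposition ends C)
    (hprop : ∀ i, (C i).weight γ = 1 ∧ (C i).Hits b) :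
    k ≤ sSup {n : ℕ | ∃ (k : ℕ) (C : Fin k → Circuit ends),
      IsFlooding ends b C ∧ n = nonzeroCount ends γ C} := by
  classical
  have hSbdd : BddAbove {n : ℕ | ∃ (k : ℕ) (C : Fin k → Circuit ends),
      IsFlooding ends b C ∧ n = nonzeroCount ends γ C} := by
    refine ⟨degree ends b / 2, ?_⟩
    rintro n ⟨k', C', hf', rfl⟩
    exact (nzc_le C').trans (le_of_eq hf'.1)
  -- rotate all circuits to be based at b
  have hrot := fun i => exists_rotation (C i) (hprop i).2
  choose C₂ hbased hperm using hrot
  have hedges : ∀ i, (C₂ i).edges = (C i).edges := fun i =>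
    List.toFinset_eq_of_perm _ _ ((hperm i).map Prod.fst)
  have hdec₂ : IsDecomposition ends C₂ := by
    intro e
    obtain ⟨i, hi, hu⟩ := hdec e
    refine ⟨i, ?_, fun j hj => hu j ?_⟩
    · show e ∈ (C₂ i).edges
      rw [hedges i]; exact hi
    · show e ∈ (C j).edges
      rw [← hedges j]; exact hj
  have hw₂ : ∀ i, (C₂ i).weight γ = 1 := by
    intro i
    have : (C₂ i).weight γ = (C i).weight γ :=
      List.Perm.sum_eq (((hperm i).map Prod.fst).map γ)
    rw [this]; exact (hprop i).1
  have hcount : ∀ i, (C₂ i).darts.countP (fun d => decide (d.2.1 = b))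
      = (C i).darts.countP (fun d => decide (d.2.1 = b)) := fun i =>
    (hperm i).countP_eq _
  -- split each circuit at b
  have hsplit := fun i => exists_split (C₂ i) (hbased i)
  choose Sg hSg1 hSg2 hSg3 using hsplit
  set SS : List (Circuit ends) := (List.finRange k).flatMap Sg with hSS
  have hflatSS : SS.flatMap Circuit.darts = (List.ofFn C₂).flatMap Circuit.darts := by
    rw [hSS, List.flatMap_assoc, List.ofFn_eq_map, List.flatMap_map]
    rw [List.flatMap_def, List.flatMap_def]
    congr 1
    exact List.map_congr_left (fun i _ => hSg1 i)
  have hgood : GoodL SS := by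
    have hg₂ := goodL_ofFn hdec₂
    constructor
    · rw [flatE, hflatSS]; exact hg₂.1
    · intro e; rw [flatE, hflatSS]; exact hg₂.2 e
  have hlenSS : SS.length = degree ends b / 2 := by
    have h1 : SS.length = ∑ i : Fin k, (Sg i).length := by
      rw [hSS, List.length_flatMap, ← List.ofFn_eq_map (f := fun a => (Sg a).length), List.sum_ofFn]
    have h2 : 2 * (∑ i : Fin k, (Sg i).length) = degree ends b := by
      have : ∀ i : Fin k, (Sg i).length = (C i).darts.countP (fun d => decide (d.2.1 = b)) := by
        intro i; rw [hSg3 i, hcount i]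
      rw [Finset.sum_congr rfl (fun i _ => this i)]
      exact sum_deg C hdec
    omega
  have hbasedSS : ∀ s ∈ SS, s.BasedAt b := by
    intro s hs
    obtain ⟨i, _, hsi⟩ := List.mem_flatMap.1 hs
    exact hSg2 i s hsi
  have hflood : IsFlooding ends b (fun i : Fin SS.length => SS.get i) :=
    ⟨hlenSS, isDecomposition_get hgood, fun i => hbasedSS _ (List.get_mem _ _)⟩
  have hmem : nonzeroCount ends γ (fun i : Fin SS.length => SS.get i) ∈
      {n : ℕ | ∃ (k : ℕ) (C : Fin k → Circuit ends),
        IsFlooding ends b C ∧ n = nonzeroCount ends γ C} :=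
    ⟨SS.length, _, hflood, rfl⟩
  have hk : k ≤ nonzeroCount ends γ (fun i : Fin SS.length => SS.get i) := by
    rw [nonzeroCount_get, hSS, List.countP_flatMap]
    calc k = ((List.finRange k).map (List.countP (fun c => decide (c.weight γ = 1)) ∘ Sg)).length := by
          simp
    _ ≤ _ := length_le_sum_list _ (by
        intro x hx
        obtain ⟨i, _, rfl⟩ := List.mem_map.1 hx
        exact one_le_countP_nonzero (hSg1 i) (hw₂ i))
  exact hk.trans (le_csSup hSbdd hmem)

end Main

/-- the maximum number of non-zero circuits in a flooding equals the
flooding number. -/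
theorem flooding_eq (ends : E → Sym2 V) (γ : E → ZMod 2) (b : V)
    (hE : IsEulerian ends) :
    sSup {n : ℕ | ∃ (k : ℕ) (C : Fin k → Circuit ends),
        IsFlooding ends b C ∧ n = nonzeroCount ends γ C} =
      floodingNumber ends γ b := by
  classical
  rw [floodingNumber]
  apply le_antisymm
  · rcases Set.eq_empty_or_nonempty {n : ℕ | ∃ (k : ℕ) (C : Fin k → Circuit ends),
        IsFlooding ends b C ∧ n = nonzeroCount ends γ C} with hS | hS
    · rw [hS, csSup_empty]
      exact bot_le
    · refine csSup_le hS ?_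
      rintro n ⟨k, C, hf, hn⟩
      exact dirB C hf hn
  · rcases Set.eq_empty_or_nonempty {k : ℕ | ∃ C : Fin k → Circuit ends,
        IsDecomposition ends C ∧ ∀ i, (C i).weight γ = 1 ∧ (C i).Hits b} with hT | hT
    · rw [hT, csSup_empty]
      exact bot_le
    · refine csSup_le hT ?_
      rintro k ⟨C, hd, hp⟩
      exact dirA C hd hp

end SignedFlood
end
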